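/- The function on signed words assigning to each signed word its number of letters (as an element of F) is a cyclic equivalence invariant and a finite type invariant of degree ≤ 1, but not of degree ≤ 0. -/
import Mathlib


/-- Letters are indexed by natural numbers; a signed letter carries a sign
(`true` = `+`, `false` = `−`). -/
abbrev Letter : Type := ℕ × Bool

/-- A signed word: every entry occurs exactly twice, and the two occurrences of
any letter carry the same sign. -/
def IsSignedWord (w : List Letter) : Prop :=
  ∀ p ∈ w, w.count p = 2 ∧ ∀ q ∈ w, q.1 = p.1 → q.2 = p.2

/-- Signed words (concrete representatives; isomorphism is subsumed by cyclic
equivalence below). -/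
def SignedWord : Type := {w : List Letter // IsSignedWord w}

/-- The set of letters occurring in a list of signed letters. -/
def lettersL (w : List Letter) : Finset ℕ := (w.map Prod.fst).toFinset

/-- The set of letters of a signed word. -/
def SignedWord.letters (w : SignedWord) : Finset ℕ := lettersL w.1

/-- The number of (distinct) letters of a signed word. -/
def SignedWord.numLetters (w : SignedWord) : ℕ := w.letters.card

theorem isSignedWord_filter (q : ℕ → Bool) {w : List Letter} (hw : IsSignedWord w) :
    IsSignedWord (w.filter fun p => q p.1) := by
  intro p hp
  rw [List.mem_filter] at hp
  refine ⟨?_, fun r hr => (hw p hp.1).2 r (List.mem_filter.mp hr).1⟩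
  rw [List.count_filter (p := fun r : Letter => q r.1) hp.2]
  exact (hw p hp.1).1

/-- Delete both occurrences of every letter of `T` from `w`. -/
def SignedWord.delete (w : SignedWord) (T : Finset ℕ) : SignedWord :=
  ⟨w.1.filter fun p => decide (p.1 ∉ T), isSignedWord_filter (fun a => decide (a ∉ T)) w.2⟩

/-- The induced signed subword of `w` on a set `U` of letters. -/
def SignedWord.restrict (w : SignedWord) (U : Finset ℕ) : SignedWord :=
  ⟨w.1.filter fun p => decide (p.1 ∈ U), isSignedWord_filter (fun a => decide (a ∈ U)) w.2⟩

/-- Sign-preserving relabeling of letters. -/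
def Iso (w w' : List Letter) : Prop :=
  ∃ f : ℕ ≃ ℕ, w' = w.map fun p => (f p.1, p.2)

/-- The basic move `A^ε x A^ε y ↦ x A^(−ε) y A^(−ε)`. -/
def Move (w w' : List Letter) : Prop :=
  ∃ (a : ℕ) (s : Bool) (x y : List Letter),
    w = (a, s) :: (x ++ (a, s) :: y) ∧ w' = x ++ (a, !s) :: (y ++ [(a, !s)])

/-- Cyclic equivalence of signed words: the equivalence relation generated by
isomorphism together with the basic move. -/
def CyclicEquivL : List Letter → List Letter → Prop :=
  Relation.EqvGen fun w w' => Iso w w' ∨ Move w w'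

/-- Cyclic equivalence of signed words. -/
def SignedWord.CyclicEquiv (w w' : SignedWord) : Prop := CyclicEquivL w.1 w'.1

/-- A cyclic equivalence invariant with values in `F`. -/
def WordInvariant (F : Type*) [Field F] (v : SignedWord → F) : Prop :=
  ∀ w w' : SignedWord, w.CyclicEquiv w' → v w = v w'

/-- The prolongation of `v` to the singular signed word `(w, S)` (the letters of
`S` being declared singular), given by inclusion–exclusion. -/
def prolong (F : Type*) [Field F] (v : SignedWord → F) (w : SignedWord) (S : Finset ℕ) : F :=
  ∑ T ∈ S.powerset, (-1 : F) ^ T.card * v (w.delete T)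

/-- `v` is a finite type invariant of degree ≤ `n`: it is a cyclic equivalence
invariant whose prolongation vanishes on every singular signed word with more
than `n` singular letters. -/
def FiniteTypeLe (F : Type*) [Field F] (n : ℕ) (v : SignedWord → F) : Prop :=
  WordInvariant F v ∧
    ∀ (w : SignedWord) (S : Finset ℕ), S ⊆ w.letters → n < S.card →
      prolong F v w S = 0

/-- The empty signed word `φ`. -/
def wordEmpty : SignedWord := ⟨[], by intro p hp; simp at hp⟩

/-- The one-letter positive signed word `AA`. -/
def wordAA : SignedWord := ⟨[(0, true), (0, true)], by unfold IsSignedWord; decide⟩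

/-- The one-letter negative signed word `ĀĀ`. -/
def wordAAneg : SignedWord := ⟨[(0, false), (0, false)], by unfold IsSignedWord; decide⟩

/-- The two-letter signed word `AABB`. -/
def wordAABB : SignedWord := ⟨[(0, true), (0, true), (1, true), (1, true)], by unfold IsSignedWord; decide⟩

/-- The two-letter signed word `AAB̄B̄`. -/
def wordAABnBn : SignedWord := ⟨[(0, true), (0, true), (1, false), (1, false)], by unfold IsSignedWord; decide⟩

/-- The two-letter signed word `AB̄B̄A`. -/
def wordABnBnA : SignedWord := ⟨[(0, true), (1, false), (1, false), (0, true)], by unfold IsSignedWord; decide⟩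

/-- The two-letter signed word `ABAB`. -/
def wordABAB : SignedWord := ⟨[(0, true), (1, true), (0, true), (1, true)], by unfold IsSignedWord; decide⟩

/-- The underlying list of the word `A₁A₁A₂A₂…AₙAₙ` (all letters positive). -/
def wListN (n : ℕ) : List Letter := (List.range n).flatMap fun i => [(i, true), (i, true)]

/-- `Ncount u w`: the number of `k`-element subsets of the letters of `w`
(`k` = number of letters of `u`) whose induced signed subword is cyclically
equivalent to (an isomorphic copy of) `u`. -/
noncomputable def Ncount (u w : SignedWord) : ℕ := by
  classical
  exact (w.letters.powerset.filter fun U =>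
    U.card = u.numLetters ∧ (w.restrict U).CyclicEquiv u).card

theorem prolong_add (F : Type*) [Field F] (v₁ v₂ : SignedWord → F) (w : SignedWord) (S : Finset ℕ) :
    prolong F (v₁ + v₂) w S = prolong F v₁ w S + prolong F v₂ w S := by
  simp [prolong, ← Finset.sum_add_distrib, mul_add]

theorem prolong_smul (F : Type*) [Field F] (c : F) (v : SignedWord → F) (w : SignedWord) (S : Finset ℕ) :
    prolong F (c • v) w S = c * prolong F v w S := by
  rw [prolong, prolong, Finset.mul_sum]
  exact Finset.sum_congr rfl fun T _ => by simp [mul_left_comm]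

/-- The `F`-vector space `Vₙ` of finite type invariants of degree ≤ `n`. -/
def Vn (F : Type*) [Field F] (n : ℕ) : Submodule F (SignedWord → F) where
  carrier := {v | FiniteTypeLe F n v}
  add_mem' := by
    rintro v₁ v₂ ⟨h1, h1'⟩ ⟨h2, h2'⟩
    refine ⟨fun w w' h => by simp [h1 w w' h, h2 w w' h], fun w S hS hc => ?_⟩
    rw [prolong_add, h1' w S hS hc, h2' w S hS hc, add_zero]
  zero_mem' := ⟨fun _ _ _ => rfl, fun w S hS hc => by simp [prolong]⟩
  smul_mem' := by
    rintro c v ⟨h, h'⟩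
    refine ⟨fun w w' hww => by simp [h w w' hww], fun w S hS hc => ?_⟩
    rw [prolong_smul, h' w S hS hc, mul_zero]

/-- Cyclic equivalence as a setoid on signed words. -/
def cycSetoid : Setoid SignedWord :=
  ⟨SignedWord.CyclicEquiv, fun w => Relation.EqvGen.refl w.1,
    fun h => Relation.EqvGen.symm _ _ h, fun h h' => Relation.EqvGen.trans _ _ _ h h'⟩


lemma lettersL_card_rel {w w' : List Letter} (h : Iso w w' ∨ Move w w') :
    (lettersL w).card = (lettersL w').card := by
  rcases h with ⟨f, rfl⟩ | ⟨a, s, x, y, rfl, rfl⟩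
  · unfold lettersL
    rw [List.map_map]
    have : (Prod.fst ∘ fun p : Letter => (f p.1, p.2)) = f ∘ Prod.fst := rfl
    rw [this, ← List.map_map]
    have himg : (List.map (⇑f) (List.map Prod.fst w)).toFinset
        = (List.map Prod.fst w).toFinset.image f := by
      ext b; simp [List.mem_map]
    rw [himg, Finset.card_image_of_injective _ f.injective]
  · congr 1
    unfold lettersL
    ext b
    simp only [List.map_append, List.map_cons, List.mem_toFinset, List.mem_append,
      List.mem_cons, List.mem_singleton, List.mem_map]
    aesop

lemma lettersL_card_cyc {l l' : List Letter} (h : CyclicEquivL l l') :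
    (lettersL l).card = (lettersL l').card := by
  induction h with
  | rel _ _ h => exact lettersL_card_rel h
  | refl => rfl
  | symm _ _ _ ih => exact ih.symm
  | trans _ _ _ _ _ ih1 ih2 => exact ih1.trans ih2

lemma numLetters_wordInvariant (F : Type*) [Field F] :
    WordInvariant F (fun w => (w.numLetters : F)) := by
  intro w w' h
  exact congrArg Nat.cast (lettersL_card_cyc h)

lemma letters_delete (w : SignedWord) (T : Finset ℕ) :
    (w.delete T).letters = w.letters \ T := by
  unfold SignedWord.delete SignedWord.letters lettersL
  ext b
  simp only [List.mem_toFinset, List.mem_map, List.mem_filter, Finset.mem_sdiff,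
    decide_eq_true_eq]
  constructor
  · rintro ⟨p, ⟨hp, hpT⟩, rfl⟩
    exact ⟨⟨p, hp, rfl⟩, hpT⟩
  · rintro ⟨⟨p, hp, rfl⟩, hbT⟩
    exact ⟨p, ⟨hp, hbT⟩, rfl⟩

lemma numLetters_delete (w : SignedWord) {T : Finset ℕ} (hT : T ⊆ w.letters) :
    (w.delete T).numLetters = w.numLetters - T.card := by
  unfold SignedWord.numLetters
  rw [letters_delete, Finset.card_sdiff_of_subset hT]

lemma sum_powerset_neg_one (F : Type*) [Field F] {S : Finset ℕ} (hS : S.Nonempty) :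
    ∑ T ∈ S.powerset, (-1 : F) ^ T.card = 0 := by
  have := Finset.sum_powerset_neg_one_pow_card_of_nonempty hS
  have : ((∑ m ∈ S.powerset, (-1 : ℤ) ^ m.card : ℤ) : F) = ((0 : ℤ) : F) := by rw [this]
  push_cast at this
  simpa using this

/-- the number-of-letters function is a cyclic equivalence
invariant and a finite type invariant of degree ≤ 1, but not of degree ≤ 0. -/
theorem numLetters_finiteType (F : Type*) [Field F] [CharZero F] :
    WordInvariant F (fun w => (w.numLetters : F)) ∧
    FiniteTypeLe F 1 (fun w => (w.numLetters : F)) ∧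
    ¬ FiniteTypeLe F 0 (fun w => (w.numLetters : F)) := by
  refine ⟨numLetters_wordInvariant F, ⟨numLetters_wordInvariant F, ?_⟩, ?_⟩
  · intro w S hS hc
    obtain ⟨a, haS⟩ := Finset.card_pos.mp (show 0 < S.card by omega)
    set S' := S.erase a with hS'
    have hins : S = insert a S' := (Finset.insert_erase haS).symm
    have ha' : a ∉ S' := Finset.notMem_erase a S
    have hS'ne : S'.Nonempty := by
      apply Finset.card_pos.mp
      rw [hS', Finset.card_erase_of_mem haS]
      omega
    have key : ∀ T ∈ S'.powerset,
        ((-1:F)^T.card * ((w.delete T).numLetters : F)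
        + (-1:F)^(insert a T).card * ((w.delete (insert a T)).numLetters : F))
        = (-1:F)^T.card := by
      intro T hT
      rw [Finset.mem_powerset] at hT
      have hTS : T ⊆ S := hT.trans (Finset.erase_subset a S)
      have haT : a ∉ T := fun h => ha' (hT h)
      have hTS2 : insert a T ⊆ S := by
        rw [hins]; exact Finset.insert_subset_insert a hT
      have h1 : T.card ≤ w.numLetters := Finset.card_le_card (hTS.trans hS)
      have h2 : (insert a T).card = T.card + 1 := Finset.card_insert_of_notMem haT
      have h3 : T.card + 1 ≤ w.numLetters := by
        rw [← h2]; exact Finset.card_le_card (hTS2.trans hS)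
      rw [numLetters_delete w (hTS.trans hS), numLetters_delete w (hTS2.trans hS), h2,
        Nat.cast_sub h1, Nat.cast_sub h3]
      push_cast
      ring
    rw [prolong, hins, Finset.sum_powerset_insert ha', ← Finset.sum_add_distrib,
      Finset.sum_congr rfl key, sum_powerset_neg_one F hS'ne]
  · rintro ⟨-, h0⟩
    have hsub : ({0} : Finset ℕ) ⊆ wordAA.letters := by decide
    have h := h0 wordAA {0} hsub (by decide)
    have e1 : (wordAA.delete ∅).numLetters = 1 := by decide
    have e2 : (wordAA.delete {0}).numLetters = 0 := by decide
    rw [prolong, show ({0} : Finset ℕ).powerset = {∅, {0}} from by decide,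
      Finset.sum_pair (by decide : (∅ : Finset ℕ) ≠ {0})] at h
    rw [e1, e2] at h
    norm_num at h
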